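/- Let S and P be commuting bounded operators on a Hilbert space with P a contraction, and suppose Φ is a bounded operator on the closure of the range of D_P satisfying S − S*P = D_P·Φ·D_P and D_P·S = Φ·D_P + Φ*·D_P·P. If X is any bounded operator on the closure of the range of D_P satisfying D_P·S = X·D_P + X*·D_P·P, then X = Φ. -/

import Mathlib

open ContinuousLinearMap

set_option maxHeartbeats 1000000 in
/-- Operators on the closure of the range of `D_P` are identified with operators on `H` that
map into that closure and vanish on its orthogonal complement. -/
theorem stmt_8 {H : Type*} [NormedAddCommGroup H] [InnerProductSpace ℂ H] [CompleteSpace H]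
    (S P D : H →L[ℂ] H) (hSP : S * P = P * S) (hP : ‖P‖ ≤ 1)
    (hDpos : D.IsPositive) (hD : D * D = 1 - adjoint P * P)
    (𝒟 : Submodule ℂ H) (h𝒟 : 𝒟 = (LinearMap.range (D : H →ₗ[ℂ] H)).topologicalClosure)
    (Φ X : H →L[ℂ] H)
    (hΦmem : ∀ x : H, Φ x ∈ 𝒟) (hXmem : ∀ x : H, X x ∈ 𝒟)
    (hΦker : ∀ x ∈ 𝒟ᗮ, Φ x = 0) (hXker : ∀ x ∈ 𝒟ᗮ, X x = 0)
    (hfund : S - adjoint S * P = D * Φ * D)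
    (hΦeq : D * S = Φ * D + adjoint Φ * D * P)
    (hXeq : D * S = X * D + adjoint X * D * P) :
    X = Φ := by
  have hDadj : adjoint D = D := isSelfAdjoint_iff'.mp hDpos.isSelfAdjoint
  have hsym : ∀ u v : H, (inner ℂ (D u) v : ℂ) = inner ℂ u (D v) := by
    intro u v
    have h := adjoint_inner_left D v u
    rwa [hDadj] at h
  set Y := X - Φ with hYdef
  have hYeq : Y * D = -(adjoint Y * D * P) := by
    have h : X * D + adjoint X * D * P = Φ * D + adjoint Φ * D * P := hXeq.symm.trans hΦeq
    simp only [hYdef, map_sub, sub_mul, neg_sub]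
    rw [sub_eq_sub_iff_add_eq_add, add_comm (adjoint Φ * D * P), h]
  have hYadj : D * adjoint Y = -(adjoint P * (D * Y)) := by
    have h := congrArg star hYeq
    simp only [star_mul, star_neg, star_eq_adjoint, adjoint_adjoint, hDadj] at h
    simpa [mul_assoc] using h
  have key : D * Y * D = adjoint P * (D * Y * D) * P := by
    calc D * Y * D = D * (Y * D) := by rw [mul_assoc]
    _ = D * -(adjoint Y * D * P) := by rw [hYeq]
    _ = -(D * adjoint Y) * (D * P) := by noncomm_ring
    _ = -(-(adjoint P * (D * Y))) * (D * P) := by rw [hYadj]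
    _ = adjoint P * (D * Y * D) * P := by noncomm_ring
  have keyn : ∀ n : ℕ, D * Y * D = (adjoint P) ^ n * (D * Y * D) * P ^ n := by
    intro n; induction n with
    | zero => simp
    | succ n ih =>
      calc D * Y * D = (adjoint P) ^ n * (D * Y * D) * P ^ n := ih
      _ = (adjoint P) ^ n * (adjoint P * (D * Y * D) * P) * P ^ n := by rw [← key]
      _ = (adjoint P) ^ (n + 1) * (D * Y * D) * P ^ (n + 1) := by
          rw [pow_succ, pow_succ']; noncomm_ring
  have hDnorm : ∀ y : H, ‖D y‖ ^ 2 = ‖y‖ ^ 2 - ‖P y‖ ^ 2 := by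
    intro y
    have h1 : (inner ℂ (D y) (D y) : ℂ) = inner ℂ y y - inner ℂ (P y) (P y) := by
      rw [hsym, ← ContinuousLinearMap.mul_apply, hD]
      simp [inner_sub_right, adjoint_inner_right]
    have h4 := congrArg (RCLike.re (K := ℂ)) h1
    simp only [map_sub, inner_self_eq_norm_sq] at h4
    exact h4
  have hDYD : D * Y * D = 0 := by
    ext x
    simp only [zero_apply]
    have hmono : ∀ n : ℕ, ‖(P ^ (n + 1)) x‖ ≤ ‖(P ^ n) x‖ := by
      intro n
      calc ‖(P ^ (n + 1)) x‖ = ‖P ((P ^ n) x)‖ := by rw [pow_succ']; rfl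
      _ ≤ ‖P‖ * ‖(P ^ n) x‖ := P.le_opNorm _
      _ ≤ 1 * ‖(P ^ n) x‖ := by gcongr
      _ = ‖(P ^ n) x‖ := one_mul _
    have hdec : ∀ a b : ℕ, a ≤ b → ‖(P ^ b) x‖ ≤ ‖(P ^ a) x‖ := by
      intro a b hab
      induction hab with
      | refl => exact le_refl _
      | step _ ih => exact le_trans (hmono _) ih
    have hconv : ∃ l : ℝ, Filter.Tendsto (fun n => ‖(P ^ n) x‖ ^ 2) Filter.atTop (nhds l) := by
      refine ⟨_, tendsto_atTop_ciInf (f := fun n => ‖(P ^ n) x‖ ^ 2) ?_ ?_⟩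
      · intro a b hab
        exact pow_le_pow_left₀ (norm_nonneg _) (hdec a b hab) 2
      · exact ⟨0, fun r ⟨n, hn⟩ => hn ▸ by positivity⟩
    obtain ⟨l, hl⟩ := hconv
    have hdiff : Filter.Tendsto (fun n => ‖D ((P ^ n) x)‖ ^ 2) Filter.atTop (nhds 0) := by
      have h1 : Filter.Tendsto (fun n => ‖(P ^ n) x‖ ^ 2 - ‖(P ^ (n + 1)) x‖ ^ 2)
          Filter.atTop (nhds (l - l)) := hl.sub (hl.comp (Filter.tendsto_add_atTop_nat 1))
      rw [sub_self] at h1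
      convert h1 using 2 with n
      rw [hDnorm ((P ^ n) x)]
      congr 2
      rw [pow_succ']; rfl
    have hDto0 : Filter.Tendsto (fun n => ‖D ((P ^ n) x)‖) Filter.atTop (nhds 0) := by
      have := hdiff.sqrt
      simpa [Real.sqrt_sq (norm_nonneg _)] using this
    have hbound : ∀ n : ℕ, ‖(D * Y * D) x‖ ≤ ‖D * Y‖ * ‖D ((P ^ n) x)‖ := by
      intro n
      have h2 : (D * Y * D) x = ((adjoint P) ^ n) ((D * Y) (D ((P ^ n) x))) := by
        conv_lhs => rw [keyn n]
        simp [mul_apply]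
      rw [h2]
      calc ‖((adjoint P) ^ n) ((D * Y) (D ((P ^ n) x)))‖
          ≤ ‖(adjoint P) ^ n‖ * ‖(D * Y) (D ((P ^ n) x))‖ := le_opNorm _ _
      _ ≤ 1 * (‖D * Y‖ * ‖D ((P ^ n) x)‖) := by
          gcongr
          · have hPa : ‖adjoint P‖ ≤ 1 := by
              rw [ContinuousLinearMap.adjoint.norm_map P]; exact hP
            clear h2
            induction n with
            | zero => rw [pow_zero]; exact ContinuousLinearMap.norm_id_le
            | succ n ih =>
              rw [pow_succ]
              exact le_trans (norm_mul_le _ _)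
                (mul_le_one₀ ih (norm_nonneg _) hPa)
          · exact le_opNorm _ _
      _ = ‖D * Y‖ * ‖D ((P ^ n) x)‖ := one_mul _
    have hT : Filter.Tendsto (fun _ : ℕ => ‖(D * Y * D) x‖) Filter.atTop (nhds 0) := by
      have h0 : Filter.Tendsto (fun n => ‖D * Y‖ * ‖D ((P ^ n) x)‖) Filter.atTop (nhds 0) := by
        simpa using hDto0.const_mul ‖D * Y‖
      exact squeeze_zero (fun n => norm_nonneg _) hbound h0
    have := tendsto_nhds_unique hT tendsto_const_nhds
    exact norm_eq_zero.mp this.symm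
  have hYD : ∀ x : H, Y (D x) = 0 := by
    intro x
    have hmem : Y (D x) ∈ 𝒟 := by
      simp only [hYdef, sub_apply]
      exact Submodule.sub_mem _ (hXmem _) (hΦmem _)
    have hperp : Y (D x) ∈ 𝒟ᗮ := by
      rw [h𝒟, ← Submodule.orthogonal_orthogonal_eq_closure,
        Submodule.triorthogonal_eq_orthogonal]
      rw [Submodule.mem_orthogonal]
      rintro u ⟨y, rfl⟩
      show (inner ℂ (D y) (Y (D x)) : ℂ) = 0
      have h3 : (inner ℂ (D y) (Y (D x)) : ℂ) = inner ℂ y ((D * Y * D) x) := by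
        rw [hsym]
        simp [mul_apply]
      rw [h3, hDYD]
      simp
    have := Submodule.inner_right_of_mem_orthogonal hmem hperp
    exact inner_self_eq_zero.mp this
  haveI : CompleteSpace 𝒟 := by
    rw [h𝒟]
    exact (Submodule.isClosed_topologicalClosure _).completeSpace_coe
  have hY0 : Y = 0 := by
    ext h
    obtain ⟨y, hy, z, hz, rfl⟩ := 𝒟.exists_add_mem_mem_orthogonal h
    have hz0 : Y z = 0 := by
      simp only [hYdef, sub_apply]
      rw [hXker z hz, hΦker z hz, sub_zero]
    have hy0 : Y y = 0 := by
      have hclosed : IsClosed ((LinearMap.ker (Y : H →ₗ[ℂ] H) : Submodule ℂ H) : Set H) :=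
        by exact ContinuousLinearMap.isClosed_ker Y
      have hle : LinearMap.range (D : H →ₗ[ℂ] H) ≤ LinearMap.ker (Y : H →ₗ[ℂ] H) := by
        rintro u ⟨v, rfl⟩
        exact hYD v
      have hsub : 𝒟 ≤ LinearMap.ker (Y : H →ₗ[ℂ] H) := by
        rw [h𝒟]
        exact Submodule.topologicalClosure_minimal _ hle hclosed
      exact hsub hy
    rw [map_add, hy0, hz0, add_zero, zero_apply]
  exact sub_eq_zero.mp hY0
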